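/- Let (G,κ) be a capacitated graph with κ(x) ≤ d_G(x) for all x, and define X = {x : κ(x) = d_G(x)}, Y = N(X) \ X, Z = V(G) \ (X ∪ Y). If X ∪ Z is an independent set in G, then there exists a DP-Nash subgraph (D, P; E') of (G,κ) with D = X ∪ Z and P = Y. -/

import Mathlib

open Finset
open scoped Classical

noncomputable section

variable {V : Type*} [Fintype V]

/-- Degree of a vertex in a (simple) graph on a finite vertex set. -/
def deg (H : SimpleGraph V) (x : V) : ℕ :=
  (Finset.univ.filter fun y => H.Adj x y).card

/-- `(D, P; H)` is a DP-Nash subgraph of the capacitated graph `(G, κ)`: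
`H` is a spanning subgraph of `G`, bipartite with partite sets `D` and `P`,
no vertex of `P` is isolated in `H`, and every `x ∈ D` has
`H`-degree `min (d_G x) (κ x)`. -/
def IsDPNash (G : SimpleGraph V) (κ : V → ℕ) (D P : Finset V) (H : SimpleGraph V) : Prop :=
  H ≤ G ∧ D ∪ P = Finset.univ ∧ Disjoint D P ∧
    (∀ ⦃u v⦄, H.Adj u v → (u ∈ D ∧ v ∈ P) ∨ (u ∈ P ∧ v ∈ D)) ∧
    (∀ v ∈ P, 0 < deg H v) ∧
    (∀ x ∈ D, deg H x = min (deg G x) (κ x))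

/-- `X = {x : κ(x) = d_G(x)}`. -/
def XX (G : SimpleGraph V) (κ : V → ℕ) : Finset V :=
  Finset.univ.filter fun x => κ x = deg G x

/-- `Y = N(X) \ X`. -/
def YY (G : SimpleGraph V) (κ : V → ℕ) : Finset V :=
  Finset.univ.filter fun y => y ∉ XX G κ ∧ ∃ x ∈ XX G κ, G.Adj x y

/-- `Z = V \ (X ∪ Y)`. -/
def ZZ (G : SimpleGraph V) (κ : V → ℕ) : Finset V :=
  Finset.univ \ (XX G κ ∪ YY G κ)

/-- `Y^{κ>0} = {y ∈ Y : κ(y) > 0}`. -/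
def Ypos (G : SimpleGraph V) (κ : V → ℕ) : Finset V :=
  (YY G κ).filter fun y => 0 < κ y

/-- The neighbours of `x` in `G` lying in `W`. -/
def nbrW (G : SimpleGraph V) (x : V) (W : Finset V) : Finset V :=
  Finset.univ.filter fun y => G.Adj x y ∧ y ∈ W

/-- `L(W) = {x ∈ X ∪ Z : |N_G(x) ∩ W| > d_G(x) - κ(x)}`. -/
def LL (G : SimpleGraph V) (κ : V → ℕ) (W : Finset V) : Finset V :=
  (XX G κ ∪ ZZ G κ).filter fun x => deg G x - κ x < (nbrW G x W).card

/-- If `X ∪ Z` is independent then there is a DP-Nash subgraph with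
`D`-set `X ∪ Z` and `P`-set `Y`. -/
theorem stmt5 (G : SimpleGraph V) (κ : V → ℕ) (hκ : ∀ v, κ v ≤ deg G v)
    (hedge : ∀ u v, G.Adj u v → 0 < κ u ∨ 0 < κ v)
    (hind : ∀ u ∈ XX G κ ∪ ZZ G κ, ∀ v ∈ XX G κ ∪ ZZ G κ, ¬ G.Adj u v) :
    ∃ H : SimpleGraph V, IsDPNash G κ (XX G κ ∪ ZZ G κ) (YY G κ) H := by
  classical
  set D := XX G κ ∪ ZZ G κ with hD
  -- choose, for each vertex, a subset of its neighbours of size κ x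
  have hex : ∀ x : V, ∃ t ⊆ Finset.univ.filter (fun y => G.Adj x y), t.card = κ x := by
    intro x
    exact Finset.exists_subset_card_eq (hκ x)
  choose T hTsub hTcard using hex
  have hTadj : ∀ x y, y ∈ T x → G.Adj x y := by
    intro x y hy
    have := hTsub x hy
    simpa using (Finset.mem_filter.mp this).2
  -- the subgraph
  let H : SimpleGraph V :=
  { Adj := fun u v => G.Adj u v ∧
      ((u ∈ D ∧ (u ∈ XX G κ ∨ v ∈ T u)) ∨ (v ∈ D ∧ (v ∈ XX G κ ∨ u ∈ T v)))
    symm := by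
      constructor
      intro u v ⟨h1, h2⟩
      exact ⟨h1.symm, h2.symm⟩
    loopless := by
      constructor
      intro u ⟨h1, _⟩
      exact G.irrefl h1 }
  have hHadj : ∀ u v, H.Adj u v ↔ (G.Adj u v ∧
      ((u ∈ D ∧ (u ∈ XX G κ ∨ v ∈ T u)) ∨ (v ∈ D ∧ (v ∈ XX G κ ∨ u ∈ T v)))) := by
    intro u v; rfl
  have hXD : ∀ x, x ∈ XX G κ → x ∈ D := fun x hx => Finset.mem_union_left _ hx
  have hunion : D ∪ YY G κ = Finset.univ := by
    ext v
    simp only [Finset.mem_union, Finset.mem_univ, iff_true, hD]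
    by_cases hvx : v ∈ XX G κ
    · tauto
    by_cases hvy : v ∈ YY G κ
    · tauto
    · left; right
      simp [ZZ, hvx, hvy]
  have hdisj : Disjoint D (YY G κ) := by
    rw [Finset.disjoint_left]
    intro a ha hay
    rcases Finset.mem_union.mp ha with h | h
    · exact (Finset.mem_filter.mp hay).2.1 h
    · have := Finset.mem_sdiff.mp h
      exact this.2 (Finset.mem_union_right _ hay)
  -- key: characterization of H-neighbours of x ∈ D
  have hDeg : ∀ x ∈ D, (Finset.univ.filter fun y => H.Adj x y) =
      if x ∈ XX G κ then (Finset.univ.filter fun y => G.Adj x y) else T x := by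
    intro x hx
    ext y
    simp only [Finset.mem_filter, Finset.mem_univ, true_and, hHadj]
    constructor
    · rintro ⟨hadj, h | h⟩
      · rcases h.2 with hX | hT
        · simp [hX, hadj]
        · by_cases hX : x ∈ XX G κ
          · simp [hX, hadj]
          · simp [hX, hT]
      · exact absurd hadj (hind x hx y h.1)
    · intro hy
      by_cases hX : x ∈ XX G κ
      · simp only [hX, if_true, Finset.mem_filter, Finset.mem_univ, true_and] at hy
        exact ⟨hy, Or.inl ⟨hx, Or.inl hX⟩⟩
      · simp only [hX, if_false] at hy
        exact ⟨hTadj x y hy, Or.inl ⟨hx, Or.inr hy⟩⟩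
  refine ⟨H, ?_, hunion, hdisj, ?_, ?_, ?_⟩
  · intro u v huv
    exact ((hHadj u v).mp huv).1
  · -- bipartite
    intro u v huv
    rcases (hHadj u v).mp huv with ⟨hadj, h | h⟩
    · left
      refine ⟨h.1, ?_⟩
      have hvD : v ∉ D := fun hv => hind u h.1 v hv hadj
      have : v ∈ D ∪ YY G κ := hunion ▸ Finset.mem_univ v
      exact (Finset.mem_union.mp this).resolve_left hvD
    · right
      refine ⟨?_, h.1⟩
      have huD : u ∉ D := fun hu => hind v h.1 u hu hadj.symm
      have : u ∈ D ∪ YY G κ := hunion ▸ Finset.mem_univ u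
      exact (Finset.mem_union.mp this).resolve_left huD
  · -- P vertices not isolated
    intro y hy
    obtain ⟨x, hx, hxy⟩ := (Finset.mem_filter.mp hy).2.2
    have : H.Adj y x := by
      rw [hHadj]
      exact ⟨hxy.symm, Or.inr ⟨hXD x hx, Or.inl hx⟩⟩
    simp only [deg]
    refine Finset.card_pos.mpr ⟨x, ?_⟩
    simp [this]
  · -- degrees in D
    intro x hx
    have hmin : min (deg G x) (κ x) = κ x := min_eq_right (hκ x)
    rw [hmin]
    simp only [deg]
    rw [Finset.filter_congr_decidable, hDeg x hx]
    by_cases hX : x ∈ XX G κ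
    · simp only [hX, if_true]
      have := (Finset.mem_filter.mp hX).2
      simpa [deg] using this.symm
    · simp [hX, hTcard x]
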